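/- Let ψ : ℝ₊ → ℝ₊ be a convex nondecreasing function with ψ(0) = 0 and ψ(x)/x → ∞ as x → ∞. Define Ψ(x) = exp(ψ(x)) - 1 for x ≥ 0 and the convex conjugate Φ(y) = sup{ x|y| - Ψ(x) : x ≥ 0 } for y ∈ ℝ. Then Φ(y) is finite for all y, Φ is convex and nondecreasing on ℝ₊ with Φ(0) = 0, and Φ(y)/(y log y) → 0 as y → ∞. -/

import Mathlib

open Filter

/-- Let `ψ : ℝ₊ → ℝ₊` be convex, nondecreasing, with `ψ 0 = 0` and `ψ x / x → ∞`. Let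
`Ψ x = exp (ψ x) - 1` and let `Φ y = sup { x * |y| - Ψ x : x ≥ 0 }` be the convex
conjugate. Then `Φ` is finite everywhere (the defining set is bounded above), convex,
nondecreasing on `ℝ₊`, `Φ 0 = 0`, and `Φ y / (y * log y) → 0` as `y → ∞`. -/
theorem young_conjugate_growth (ψ : ℝ → ℝ)
    (hconv : ConvexOn ℝ (Set.Ici 0) ψ) (hmono : MonotoneOn ψ (Set.Ici 0))
    (h0 : ψ 0 = 0) (hnonneg : ∀ x : ℝ, 0 ≤ x → 0 ≤ ψ x)
    (hgrow : Tendsto (fun x => ψ x / x) atTop atTop)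
    (Φ : ℝ → ℝ)
    (hΦ : ∀ y : ℝ, Φ y =
      sSup ((fun x => x * |y| - (Real.exp (ψ x) - 1)) '' Set.Ici 0)) :
    (∀ y : ℝ, BddAbove ((fun x => x * |y| - (Real.exp (ψ x) - 1)) '' Set.Ici 0)) ∧
    ConvexOn ℝ Set.univ Φ ∧ MonotoneOn Φ (Set.Ici 0) ∧ Φ 0 = 0 ∧
    Tendsto (fun y => Φ y / (y * Real.log y)) atTop (nhds 0) := by
  have hΨ1 : ∀ x : ℝ, 0 ≤ x → 0 ≤ Real.exp (ψ x) - 1 := by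
    intro x hx
    have h1 := hnonneg x hx
    have h2 := Real.one_le_exp h1
    linarith
  have hmem : ∀ y : ℝ,
      (0 : ℝ) ∈ ((fun x => x * |y| - (Real.exp (ψ x) - 1)) '' Set.Ici 0) := by
    intro y
    exact ⟨0, Set.self_mem_Ici, by simp [h0]⟩
  have hbdd : ∀ y : ℝ,
      BddAbove ((fun x => x * |y| - (Real.exp (ψ x) - 1)) '' Set.Ici 0) := by
    intro y
    obtain ⟨M, hM⟩ := Filter.eventually_atTop.1 (hgrow.eventually_ge_atTop (|y| + 1))
    refine ⟨max M 0 * |y|, ?_⟩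
    rintro v ⟨x, hx, rfl⟩
    rcases le_or_gt x (max M 0) with h | h
    · have h1 := hΨ1 x hx
      have h2 : x * |y| ≤ max M 0 * |y| := mul_le_mul_of_nonneg_right h (abs_nonneg y)
      simp only
      linarith
    · have hxpos : 0 < x := lt_of_le_of_lt (le_max_right M 0) h
      have hxM : M ≤ x := le_trans (le_max_left M 0) h.le
      have h1 : |y| + 1 ≤ ψ x / x := hM x hxM
      have h2 : (|y| + 1) * x ≤ ψ x := (le_div_iff₀ hxpos).1 h1
      have h3 : ψ x ≤ Real.exp (ψ x) - 1 := by linarith [Real.add_one_le_exp (ψ x)]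
      have hMn : 0 ≤ max M 0 * |y| := mul_nonneg (le_max_right M 0) (abs_nonneg y)
      simp only
      nlinarith
  have hΦnn : ∀ y : ℝ, 0 ≤ Φ y := by
    intro y
    rw [hΦ]
    exact le_csSup (hbdd y) (hmem y)
  have hΦzero : Φ 0 = 0 := by
    rw [hΦ]
    refine le_antisymm ?_ (le_csSup (hbdd 0) (hmem 0))
    apply csSup_le ⟨0, hmem 0⟩
    rintro v ⟨x, hx, rfl⟩
    have h1 := hΨ1 x hx
    simp only [abs_zero, mul_zero]
    linarith
  have hmonoΦ : MonotoneOn Φ (Set.Ici 0) := by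
    intro y₁ h₁ y₂ h₂ hle
    rw [hΦ y₁, hΦ y₂]
    apply csSup_le ⟨0, hmem y₁⟩
    rintro v ⟨x, hx, rfl⟩
    refine le_trans ?_ (le_csSup (hbdd y₂) ⟨x, hx, rfl⟩)
    have habs : |y₁| ≤ |y₂| := by
      rw [abs_of_nonneg h₁, abs_of_nonneg h₂]; exact hle
    simp only
    nlinarith [mul_le_mul_of_nonneg_left habs hx]
  have hconvΦ : ConvexOn ℝ Set.univ Φ := by
    refine ⟨convex_univ, fun y₁ _ y₂ _ a b ha hb hab => ?_⟩
    rw [hΦ]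
    apply csSup_le ⟨0, hmem _⟩
    rintro v ⟨x, hx, rfl⟩
    simp only [smul_eq_mul]
    have habs : |a * y₁ + b * y₂| ≤ a * |y₁| + b * |y₂| := by
      calc |a * y₁ + b * y₂| ≤ |a * y₁| + |b * y₂| := abs_add_le _ _
        _ = a * |y₁| + b * |y₂| := by
            rw [abs_mul, abs_mul, abs_of_nonneg ha, abs_of_nonneg hb]
    have h1 : x * |y₁| - (Real.exp (ψ x) - 1) ≤ Φ y₁ := by
      rw [hΦ]; exact le_csSup (hbdd y₁) ⟨x, hx, rfl⟩
    have h2 : x * |y₂| - (Real.exp (ψ x) - 1) ≤ Φ y₂ := by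
      rw [hΦ]; exact le_csSup (hbdd y₂) ⟨x, hx, rfl⟩
    have t1 := mul_le_mul_of_nonneg_left h1 ha
    have t2 := mul_le_mul_of_nonneg_left h2 hb
    have t3 := mul_le_mul_of_nonneg_left habs hx
    have hE : a * (Real.exp (ψ x) - 1) + b * (Real.exp (ψ x) - 1)
        = Real.exp (ψ x) - 1 := by
      have : (a + b) * (Real.exp (ψ x) - 1) = Real.exp (ψ x) - 1 := by
        rw [hab, one_mul]
      linarith [this]
    linarith [t1, t2, t3, hE]
  refine ⟨hbdd, hconvΦ, hmonoΦ, hΦzero, ?_⟩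
  rw [Metric.tendsto_nhds]
  intro ε hε
  obtain ⟨M, hM⟩ := Filter.eventually_atTop.1 (hgrow.eventually_ge_atTop (2 / ε + 1))
  filter_upwards [Filter.eventually_ge_atTop (Real.exp 1),
    Filter.eventually_ge_atTop (Real.exp (M * (2 / ε)))] with y hy1 hy2
  have hy0 : 0 < y := lt_of_lt_of_le (Real.exp_pos 1) hy1
  have hy2' : 2 ≤ y := by
    have := Real.add_one_le_exp 1
    linarith
  have hlogy : 1 ≤ Real.log y := (Real.le_log_iff_exp_le hy0).2 hy1
  have hlog2 : M * (2 / ε) ≤ Real.log y := (Real.le_log_iff_exp_le hy0).2 hy2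
  have hylog : 0 < y * Real.log y := mul_pos hy0 (by linarith)
  have hub : Φ y ≤ ε / 2 * (y * Real.log y) := by
    rw [hΦ]
    apply csSup_le ⟨0, hmem y⟩
    rintro v ⟨x, hx, rfl⟩
    simp only
    rw [abs_of_nonneg hy0.le]
    rcases le_or_gt x (ε / 2 * Real.log y) with h | h
    · have hE := hΨ1 x hx
      nlinarith [mul_le_mul_of_nonneg_right h hy0.le]
    · have hMle : M ≤ ε / 2 * Real.log y := by
        have h' := mul_le_mul_of_nonneg_left hlog2 (by positivity : (0:ℝ) ≤ ε / 2)
        have heq : ε / 2 * (M * (2 / ε)) = M := by field_simp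
        linarith
      have hxM : M ≤ x := le_trans hMle h.le
      have hxpos : 0 < x := lt_of_le_of_lt (by positivity) h
      have hψ := hM x hxM
      have hψx : (2 / ε + 1) * x ≤ ψ x := (le_div_iff₀ hxpos).1 hψ
      have h4 : Real.log y + x ≤ ψ x := by
        have h5 := mul_le_mul_of_nonneg_right h.le (by positivity : (0:ℝ) ≤ 2 / ε)
        have heq : ε / 2 * Real.log y * (2 / ε) = Real.log y := by field_simp
        nlinarith
      have h5 : y * Real.exp x ≤ Real.exp (ψ x) := by
        rw [← Real.exp_log hy0, ← Real.exp_add]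
        exact Real.exp_le_exp.2 h4
      have h6 : x + 1 ≤ Real.exp x := Real.add_one_le_exp x
      have h7 := mul_le_mul_of_nonneg_left h6 hy0.le
      have h8 : 0 ≤ ε / 2 * (y * Real.log y) := by positivity
      linarith
  rw [Real.dist_eq, sub_zero,
    abs_of_nonneg (div_nonneg (hΦnn y) hylog.le), div_lt_iff₀ hylog]
  nlinarith [mul_pos (half_pos hε) hylog]
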